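/- Let ψ be a unit vector in the tensor product of two finite-dimensional complex Hilbert spaces (a matrix-indexed vector with index pairs (a,b), a ranging over Fin d₁ and b over Fin d₂), let ρ = ψψ† be the associated pure-state density matrix, and let ρ₁ be its partial trace over the second factor. Then the trace norm of the partial transpose of ρ equals the square of the trace of the positive semidefinite square root of ρ₁: ‖ρ^{T₂}‖₁ = (Tr √ρ₁)². In particular, the partial-transpose negativity of a bipartite pure state equals its Rényi-1/2 entanglement entropy. -/

import Mathlib

open scoped ComplexOrder Matrix

noncomputable section

/-- The positive semidefinite square root, as `Matrix.PosSemidef.sqrt` was defined in the older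
Mathlib (removed since). -/
def Matrix.PosSemidef.sqrt {n 𝕜 : Type*} [Fintype n] [DecidableEq n] [RCLike 𝕜]
    {A : Matrix n n 𝕜} (hA : A.PosSemidef) : Matrix n n 𝕜 :=
  hA.1.eigenvectorUnitary.1 * Matrix.diagonal ((↑) ∘ (√·) ∘ hA.1.eigenvalues) *
    (star hA.1.eigenvectorUnitary : Matrix n n 𝕜)

/-- The trace norm `‖M‖₁ = Tr√(MᴴM)` of a complex matrix. -/
def traceNorm {m n : Type*} [Fintype m] [Fintype n] [DecidableEq n]
    (M : Matrix m n ℂ) : ℝ :=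
  ((Matrix.posSemidef_conjTranspose_mul_self M).sqrt).trace.re

open scoped Classical in
/-- The positive semidefinite square root of a positive semidefinite matrix
(junk value `0` on other matrices). -/
def matSqrt {n : Type*} [Fintype n] [DecidableEq n] (M : Matrix n n ℂ) :
    Matrix n n ℂ :=
  if h : M.PosSemidef then h.sqrt else 0

/-- The partial transpose on the second factor:
`M^{T₂}[(a,b),(c,d)] = M[(a,d),(c,b)]`. -/
def ptranspose {m p R : Type*} (M : Matrix (m × p) (m × p) R) :
    Matrix (m × p) (m × p) R :=
  fun c c' => M (c.1, c'.2) (c'.1, c.2)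

/-- The realignment: `R_M[(a,c),(b,d)] = M[(a,b),(c,d)]`. -/
def realign {m p : Type*} (M : Matrix (m × p) (m × p) ℂ) :
    Matrix (m × m) (p × p) ℂ :=
  fun x y => M (x.1, y.1) (x.2, y.2)

/-- The pure-state density matrix `ρ = ψψ†` of a bipartite state vector `ψ`. -/
def pureDensity {d₁ d₂ : ℕ} (ψ : Fin d₁ × Fin d₂ → ℂ) :
    Matrix (Fin d₁ × Fin d₂) (Fin d₁ × Fin d₂) ℂ :=
  fun i j => ψ i * (starRingEnd ℂ) (ψ j)

/-- The partial trace over the second factor: `ρ₁[a,c] = Σ_b M[(a,b),(c,b)]`. -/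
def ptrace2 {d₁ d₂ : ℕ} (M : Matrix (Fin d₁ × Fin d₂) (Fin d₁ × Fin d₂) ℂ) :
    Matrix (Fin d₁) (Fin d₁) ℂ :=
  fun a c => ∑ b, M (a, b) (c, b)

/-- The partial trace over the first factor: `ρ₂[b,d] = Σ_a M[(a,b),(a,d)]`. -/
def ptrace1 {d₁ d₂ : ℕ} (M : Matrix (Fin d₁ × Fin d₂) (Fin d₁ × Fin d₂) ℂ) :
    Matrix (Fin d₂) (Fin d₂) ℂ :=
  fun b d => ∑ a, M (a, b) (a, d)

end

section PSDsqrt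
open scoped MatrixOrder

lemma Matrix.PosSemidef.sqrt_eq_cfc {n : Type*} [Fintype n] [DecidableEq n]
    {A : Matrix n n ℂ} (hA : A.PosSemidef) : hA.sqrt = CFC.sqrt A := by
  rw [CFC.sqrt_eq_real_sqrt A hA.nonneg, cfcₙ_eq_cfc, hA.1.cfc_eq]
  simp only [Matrix.IsHermitian.cfc, Unitary.conjStarAlgAut_apply]
  rfl

lemma Matrix.PosSemidef.posSemidef_sqrt {n : Type*} [Fintype n] [DecidableEq n]
    {A : Matrix n n ℂ} (hA : A.PosSemidef) : hA.sqrt.PosSemidef := by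
  rw [hA.sqrt_eq_cfc]
  exact Matrix.nonneg_iff_posSemidef.mp (CFC.sqrt_nonneg A)

lemma Matrix.PosSemidef.sqrt_mul_self {n : Type*} [Fintype n] [DecidableEq n]
    {A : Matrix n n ℂ} (hA : A.PosSemidef) : hA.sqrt * hA.sqrt = A := by
  rw [hA.sqrt_eq_cfc]
  exact CFC.sqrt_mul_sqrt_self A hA.nonneg

lemma Matrix.PosSemidef.eq_sqrt_of_sq_eq {n : Type*} [Fintype n] [DecidableEq n]
    {B A : Matrix n n ℂ} (hB : B.PosSemidef) (hA : A.PosSemidef) (h : B ^ 2 = A) :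
    B = hA.sqrt := by
  rw [hA.sqrt_eq_cfc]
  exact (CFC.sqrt_unique (by rw [← h, pow_two]) hB.nonneg).symm

lemma Matrix.posSemidef_iff_eq_transpose_mul_self {n : Type*} [Fintype n] [DecidableEq n]
    {A : Matrix n n ℂ} : A.PosSemidef ↔ ∃ B : Matrix n n ℂ, A = Bᴴ * B := by
  constructor
  · intro hA
    refine ⟨hA.sqrt, ?_⟩
    rw [hA.posSemidef_sqrt.1, hA.sqrt_mul_self]
  · rintro ⟨B, rfl⟩
    exact Matrix.posSemidef_conjTranspose_mul_self B

end PSDsqrt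

open Matrix Polynomial
open scoped ComplexOrder Matrix Kronecker

noncomputable section
namespace PTaux

variable {n : Type*} [Fintype n] [DecidableEq n]

lemma aeval_conj (V D : Matrix n n ℂ) (hV : V * star V = 1) (hV' : star V * V = 1)
    (p : ℂ[X]) :
    aeval (V * D * star V) p = V * aeval D p * star V := by
  have hcan : ∀ X : Matrix n n ℂ, star V * (V * X) = X := fun X => by
    rw [← Matrix.mul_assoc, hV', Matrix.one_mul]
  have hpow : ∀ k : ℕ, (V * D * star V) ^ k = V * D ^ k * star V := by
    intro k
    induction k with
    | zero => simp [hV]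
    | succ k ih =>
      rw [pow_succ, ih, pow_succ]
      calc V * D ^ k * star V * (V * D * star V)
          = V * D ^ k * (star V * (V * (D * star V))) := by
            simp only [Matrix.mul_assoc]
        _ = V * (D ^ k * D) * star V := by rw [hcan]; simp only [Matrix.mul_assoc]
  induction p using Polynomial.induction_on' with
  | add p q hp hq => simp [hp, hq, Matrix.mul_add, Matrix.add_mul]
  | monomial k a =>
    rw [aeval_monomial, aeval_monomial, hpow, ← Algebra.smul_def, ← Algebra.smul_def]
    simp [Matrix.mul_smul, Matrix.smul_mul]

lemma aeval_diagonal (v : n → ℂ) (p : ℂ[X]) :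
    aeval (Matrix.diagonal v) p = Matrix.diagonal (fun i => p.eval (v i)) := by
  have key : ∀ i, (aeval v p) i = p.eval (v i) := fun i =>
    (aeval_algHom_apply (Pi.evalAlgHom ℂ (fun _ => ℂ) i) v p).symm.trans
      (congrFun (Polynomial.coe_aeval_eq_eval (v i)) p)
  have h1 : Matrix.diagonal v = Matrix.diagonalAlgHom ℂ v := rfl
  rw [h1, aeval_algHom_apply]
  show Matrix.diagonal (aeval v p) = _
  rw [funext key]

lemma sqrt_eq_aeval {M : Matrix n n ℂ} (hM : M.PosSemidef) (p : ℂ[X])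
    (h : ∀ i, p.eval ((hM.1.eigenvalues i : ℝ) : ℂ) =
      ((Real.sqrt (hM.1.eigenvalues i) : ℝ) : ℂ)) :
    hM.sqrt = aeval M p := by
  have hV : (hM.1.eigenvectorUnitary : Matrix n n ℂ) *
      star (hM.1.eigenvectorUnitary : Matrix n n ℂ) = 1 :=
    Matrix.mem_unitaryGroup_iff.mp (hM.1.eigenvectorUnitary).2
  have hV' : star (hM.1.eigenvectorUnitary : Matrix n n ℂ) *
      (hM.1.eigenvectorUnitary : Matrix n n ℂ) = 1 :=
    Matrix.mem_unitaryGroup_iff'.mp (hM.1.eigenvectorUnitary).2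
  conv_rhs => rw [hM.1.spectral_theorem, Unitary.conjStarAlgAut_apply]
  rw [aeval_conj _ _ hV hV']
  have hdiag : (Matrix.diagonal (RCLike.ofReal ∘ hM.1.eigenvalues) : Matrix n n ℂ) =
      Matrix.diagonal (fun i => ((hM.1.eigenvalues i : ℝ) : ℂ)) := rfl
  rw [hdiag, aeval_diagonal]
  unfold Matrix.PosSemidef.sqrt
  have hfun : (RCLike.ofReal ∘ Real.sqrt ∘ hM.1.eigenvalues : n → ℂ) =
      (fun i => p.eval ((hM.1.eigenvalues i : ℝ) : ℂ)) := funext fun i => (h i).symm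
  rw [hfun]

lemma intertwine {m : Type*} [Fintype m] [DecidableEq m]
    (A : Matrix m n ℂ) (q : ℂ[X]) :
    A * aeval (Aᴴ * A) q = aeval (A * Aᴴ) q * A := by
  have hpow : ∀ k : ℕ, A * (Aᴴ * A) ^ k = (A * Aᴴ) ^ k * A := by
    intro k
    induction k with
    | zero => simp
    | succ k ih =>
      rw [pow_succ, pow_succ, ← Matrix.mul_assoc, ih]
      simp only [Matrix.mul_assoc]
  induction q using Polynomial.induction_on' with
  | add p q hp hq => simp [hp, hq, Matrix.mul_add, Matrix.add_mul]
  | monomial k a =>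
    simp only [aeval_monomial, ← Algebra.smul_def, Matrix.mul_smul, Matrix.smul_mul, hpow]

lemma trace_sqrt_symm {m : Type*} [Fintype m] [DecidableEq m] (A : Matrix m n ℂ) :
    (Matrix.posSemidef_self_mul_conjTranspose A).sqrt.trace =
    (Matrix.posSemidef_conjTranspose_mul_self A).sqrt.trace := by
  set hP := Matrix.posSemidef_self_mul_conjTranspose A with hPdef
  set hQ := Matrix.posSemidef_conjTranspose_mul_self A with hQdef
  classical
  set s : Finset ℂ := insert 0
    ((Finset.image (fun i => ((hP.1.eigenvalues i : ℝ) : ℂ)) Finset.univ) ∪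
     (Finset.image (fun i => ((hQ.1.eigenvalues i : ℝ) : ℂ)) Finset.univ)) with hs
  set f : ℂ → ℂ := fun z => ((Real.sqrt z.re : ℝ) : ℂ) with hf
  set p : ℂ[X] := Lagrange.interpolate s id f with hp
  have heval : ∀ z ∈ s, p.eval z = f z := fun z hz => by
    rw [hp]; exact Lagrange.eval_interpolate_at_node f (Set.injOn_id _) hz
  have hp0 : p.eval 0 = 0 := by
    rw [heval 0 (Finset.mem_insert_self _ _)]
    simp [hf]
  have hPe : ∀ i, p.eval ((hP.1.eigenvalues i : ℝ) : ℂ) =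
      ((Real.sqrt (hP.1.eigenvalues i) : ℝ) : ℂ) := by
    intro i
    rw [heval _ (by simp [hs])]
    simp [hf]
  have hQe : ∀ i, p.eval ((hQ.1.eigenvalues i : ℝ) : ℂ) =
      ((Real.sqrt (hQ.1.eigenvalues i) : ℝ) : ℂ) := by
    intro i
    rw [heval _ (by simp [hs])]
    simp [hf]
  rw [sqrt_eq_aeval hP p hPe, sqrt_eq_aeval hQ p hQe]
  obtain ⟨q, hq⟩ : X ∣ p := Polynomial.X_dvd_iff.mpr
    (by rw [Polynomial.coeff_zero_eq_eval_zero, hp0])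
  rw [hq]
  simp only [_root_.map_mul, Polynomial.aeval_X]
  calc (A * Aᴴ * aeval (A * Aᴴ) q).trace
      = (aeval (A * Aᴴ) q * (A * Aᴴ)).trace := by rw [Matrix.trace_mul_comm]
    _ = ((aeval (A * Aᴴ) q * A) * Aᴴ).trace := by simp only [Matrix.mul_assoc]
    _ = ((A * aeval (Aᴴ * A) q) * Aᴴ).trace := by rw [← intertwine]
    _ = (Aᴴ * (A * aeval (Aᴴ * A) q)).trace := by rw [Matrix.trace_mul_comm]
    _ = (Aᴴ * A * aeval (Aᴴ * A) q).trace := by simp only [Matrix.mul_assoc]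

lemma conjTranspose_kronecker {m p : Type*} (X : Matrix m m ℂ) (Y : Matrix p p ℂ) :
    (X ⊗ₖ Y)ᴴ = Xᴴ ⊗ₖ Yᴴ := by
  ext ⟨a, b⟩ ⟨c, d⟩
  simp [Matrix.conjTranspose_apply, Matrix.kroneckerMap_apply]

lemma kron_psd {m p : Type*} [Fintype m] [DecidableEq m] [Fintype p] [DecidableEq p]
    {P : Matrix m m ℂ} {Q : Matrix p p ℂ} (hP : P.PosSemidef) (hQ : Q.PosSemidef) :
    (P ⊗ₖ Q).PosSemidef := by
  obtain ⟨B, rfl⟩ := Matrix.posSemidef_iff_eq_transpose_mul_self.mp hP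
  obtain ⟨C, rfl⟩ := Matrix.posSemidef_iff_eq_transpose_mul_self.mp hQ
  rw [Matrix.mul_kronecker_mul, ← conjTranspose_kronecker]
  exact Matrix.posSemidef_conjTranspose_mul_self _

lemma sqrt_congr {M N : Matrix n n ℂ} (h : M = N) (hM : M.PosSemidef) (hN : N.PosSemidef) :
    hM.sqrt = hN.sqrt := by subst h; rfl

lemma sqrt_kron {m p : Type*} [Fintype m] [DecidableEq m] [Fintype p] [DecidableEq p]
    {P : Matrix m m ℂ} {Q : Matrix p p ℂ} (hP : P.PosSemidef) (hQ : Q.PosSemidef)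
    (hPQ : (P ⊗ₖ Q).PosSemidef) :
    hPQ.sqrt = hP.sqrt ⊗ₖ hQ.sqrt := by
  refine ((kron_psd hP.posSemidef_sqrt hQ.posSemidef_sqrt).eq_sqrt_of_sq_eq hPQ ?_).symm
  rw [pow_two, ← Matrix.mul_kronecker_mul, hP.sqrt_mul_self, hQ.sqrt_mul_self]

def mat {d₁ d₂ : ℕ} (ψ : Fin d₁ × Fin d₂ → ℂ) : Matrix (Fin d₁) (Fin d₂) ℂ :=
  Matrix.of fun a b => ψ (a, b)

end PTaux
end

open scoped Kronecker in
set_option maxRecDepth 10000 in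
/-- For a bipartite pure state `ρ = ψψ†`, the trace norm of the partial transpose
equals `(Tr √ρ₁)²`: the PT negativity of a pure state is its Rényi-1/2 entanglement
entropy. -/
theorem traceNorm_ptranspose_pure {d₁ d₂ : ℕ} (ψ : Fin d₁ × Fin d₂ → ℂ)
    (hψ : ∑ i, Complex.normSq (ψ i) = 1) :
    (traceNorm (ptranspose (pureDensity ψ)) : ℂ) =
      (matSqrt (ptrace2 (pureDensity ψ))).trace ^ 2 := by
  classical
  have h1 : (ptranspose (pureDensity ψ))ᴴ * (ptranspose (pureDensity ψ)) =
      (PTaux.mat ψ * (PTaux.mat ψ)ᴴ) ⊗ₖ ((PTaux.mat ψ)ᴴ * PTaux.mat ψ) := by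
    ext ⟨a, b⟩ ⟨e, f⟩
    simp only [Matrix.mul_apply, Matrix.conjTranspose_apply, ptranspose, pureDensity,
      Matrix.kroneckerMap_apply, PTaux.mat, Matrix.of_apply, Fintype.sum_prod_type,
      starRingEnd_apply, star_mul', star_star]
    rw [Finset.sum_mul_sum, Finset.sum_comm]
    refine Finset.sum_congr rfl fun c _ => Finset.sum_congr rfl fun d _ => ?_
    ring
  have h2 : ptrace2 (pureDensity ψ) = PTaux.mat ψ * (PTaux.mat ψ)ᴴ := by
    ext a c
    simp only [ptrace2, pureDensity, Matrix.mul_apply, Matrix.conjTranspose_apply,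
      PTaux.mat, Matrix.of_apply, starRingEnd_apply]
  have hP := Matrix.posSemidef_self_mul_conjTranspose (PTaux.mat ψ)
  have hQ := Matrix.posSemidef_conjTranspose_mul_self (PTaux.mat ψ)
  have hPQ := PTaux.kron_psd hP hQ
  have hsq : (Matrix.posSemidef_conjTranspose_mul_self (ptranspose (pureDensity ψ))).sqrt
      = hP.sqrt ⊗ₖ hQ.sqrt := by
    rw [PTaux.sqrt_congr h1 _ hPQ, PTaux.sqrt_kron hP hQ hPQ]
  have htr : (hQ.sqrt).trace = (hP.sqrt).trace := (PTaux.trace_sqrt_symm (PTaux.mat ψ)).symm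
  set t := (hP.sqrt).trace with ht
  have hherm : (starRingEnd ℂ) t = t := by
    have hh : (hP.sqrt)ᴴ = hP.sqrt := hP.posSemidef_sqrt.1
    calc (starRingEnd ℂ) t = (hP.sqrt)ᴴ.trace := by
          rw [Matrix.trace_conjTranspose, starRingEnd_apply]
      _ = t := by rw [hh]
  have htre : ((t.re : ℝ) : ℂ) = t := Complex.conj_eq_iff_re.mp hherm
  have hTN : traceNorm (ptranspose (pureDensity ψ)) = (t * t).re := by
    rw [traceNorm, hsq, Matrix.trace_kronecker, htr]
  have hms : matSqrt (ptrace2 (pureDensity ψ)) = hP.sqrt := by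
    rw [h2]
    unfold matSqrt
    rw [dif_pos hP]
  rw [hTN, hms, ← ht]
  obtain ⟨x, hx⟩ : ∃ x : ℝ, t = (x : ℂ) := ⟨t.re, htre.symm⟩
  rw [hx]
  rw [← Complex.ofReal_mul, Complex.ofReal_re, Complex.ofReal_mul]
  ring
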